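/- For t > 0 and γ ≥ 0, the subordination identity e^{-tγ} = (1/√π) ∫₀^∞ (e^{-u}/√u) e^{-γ² t²/(4u)} du holds. -/

import Mathlib

open MeasureTheory Real Set

lemma sub_image_f (c : ℝ) (hc : 0 < c) : (fun x : ℝ => x - c / x) '' Ioi 0 = univ := by
  ext y; simp only [mem_univ, iff_true]
  set s := Real.sqrt (y^2 + 4*c) with hs
  have hs2 : s^2 = y^2 + 4*c := Real.sq_sqrt (by positivity)
  have hsy : -y < s := by
    nlinarith [Real.sqrt_nonneg (y^2+4*c), abs_nonneg y, sq_abs y]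
  have hx : (0:ℝ) < (y+s)/2 := by linarith
  refine ⟨(y + s)/2, hx, ?_⟩
  have hq : c / ((y+s)/2) = (y+s)/2 - y := by
    rw [div_eq_iff hx.ne']; nlinarith
  simp only [hq]; ring

lemma sub_deriv_f (c : ℝ) (x : ℝ) (hx : 0 < x) :
    HasDerivAt (fun x : ℝ => x - c / x) (1 + c / x^2) x := by
  have h := (hasDerivAt_id x).sub ((hasDerivAt_inv hx.ne').const_mul c)
  have h2 : (fun y : ℝ => y - c / y) = fun y => id y - c * y⁻¹ := by
    funext y; simp [div_eq_mul_inv]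
  rw [h2]
  convert h using 1
  all_goals first | rfl | ring

lemma sub_inj_f (c : ℝ) (hc : 0 ≤ c) : InjOn (fun x : ℝ => x - c / x) (Ioi 0) := by
  apply StrictMonoOn.injOn
  intro a ha b hb hab
  simp only [mem_Ioi] at ha hb
  have : c / b ≤ c / a := by gcongr
  simp only; linarith

lemma sub_int_g (c : ℝ) (hc : 0 ≤ c) :
    IntegrableOn (fun x : ℝ => Real.exp (-(x - c/x)^2)) (Ioi 0) := by
  have hI : Integrable (fun x : ℝ => Real.exp (2*c) * Real.exp (-1 * x^2)) :=
    (integrable_exp_neg_mul_sq one_pos).const_mul _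
  refine (hI.integrableOn).mono' ?_ ?_
  · refine (Real.measurable_exp.comp ?_).aestronglyMeasurable
    exact ((measurable_id.sub ((measurable_const (a := c)).div measurable_id)).pow_const 2).neg
  · filter_upwards [ae_restrict_mem measurableSet_Ioi] with x hx
    simp only [mem_Ioi] at hx
    rw [Real.norm_eq_abs, abs_of_pos (Real.exp_pos _), ← Real.exp_add]
    apply Real.exp_le_exp.2
    have h1 : 0 ≤ c^2/x^2 := by positivity
    have : (x - c/x)^2 = x^2 - 2*c + c^2/x^2 := by field_simp; ring
    nlinarith

-- Glasser: ∫₀^∞ exp(-(x-c/x)²) = √π/2 for c > 0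
lemma glasser (c : ℝ) (hc : 0 < c) :
    ∫ x in Ioi (0:ℝ), Real.exp (-(x - c/x)^2) = Real.sqrt π / 2 := by
  set g : ℝ → ℝ := fun x => Real.exp (-(x - c/x)^2) with hg
  -- step B: ∫ g = ∫ (c/x²) * g
  have himg : (fun x : ℝ => c / x) '' Ioi 0 = Ioi 0 := by
    ext y; constructor
    · rintro ⟨x, hx, rfl⟩; exact div_pos hc hx
    · intro hy; exact ⟨c / y, div_pos hc hy, by field_simp⟩
  have hderiv : ∀ x ∈ Ioi (0:ℝ), HasDerivWithinAt (fun x : ℝ => c / x) (-(c / x^2)) (Ioi 0) x := by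
    intro x hx
    have h := ((hasDerivAt_inv (ne_of_gt hx)).const_mul c).hasDerivWithinAt (s := Ioi 0)
    convert h using 1 <;> first | rfl | ring
  have hinj : InjOn (fun x : ℝ => c / x) (Ioi 0) := by
    intro a ha b hb hab
    simp only [mem_Ioi] at ha hb
    field_simp at hab
    exact hab.symm
  have hB : ∫ x in Ioi (0:ℝ), g x = ∫ x in Ioi (0:ℝ), (c / x^2) * g x := by
    conv_lhs => rw [← himg]
    rw [integral_image_eq_integral_abs_deriv_smul measurableSet_Ioi hderiv hinj]
    apply setIntegral_congr_fun measurableSet_Ioi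
    intro x hx
    simp only [mem_Ioi] at hx
    have h1 : |(-(c / x^2))| = c / x^2 := by rw [abs_neg, abs_of_pos (by positivity)]
    simp only [smul_eq_mul, h1, hg]
    congr 2
    have : c / (c / x) = x := by field_simp
    rw [this]; ring
  -- integrability of (c/x²) * g
  have hint2 : IntegrableOn (fun x : ℝ => (c / x^2) * g x) (Ioi 0) := by
    have := (integrableOn_image_iff_integrableOn_abs_deriv_smul measurableSet_Ioi hderiv hinj g).1
      (by rw [himg]; exact sub_int_g c hc.le)
    apply this.congr_fun ?_ measurableSet_Ioi
    intro x hx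
    simp only [mem_Ioi] at hx
    have h1 : |(-(c / x^2))| = c / x^2 := by rw [abs_neg, abs_of_pos (by positivity)]
    simp only [smul_eq_mul, h1, hg]
    congr 2
    have : c / (c / x) = x := by field_simp
    rw [this]; ring
  -- step C: √π = ∫ (1 + c/x²) g
  have hC : Real.sqrt π = ∫ x in Ioi (0:ℝ), (1 + c / x^2) * g x := by
    have h0 : Real.sqrt π = ∫ y : ℝ, Real.exp (-y^2) := by
      have := integral_gaussian 1
      simp only [neg_mul, one_mul, div_one] at this
      rw [this]
    rw [h0, ← setIntegral_univ, ← sub_image_f c hc,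
      integral_image_eq_integral_abs_deriv_smul measurableSet_Ioi
        (fun x hx => (sub_deriv_f c x hx).hasDerivWithinAt) (sub_inj_f c hc.le)]
    apply setIntegral_congr_fun measurableSet_Ioi
    intro x hx
    simp only [mem_Ioi] at hx
    simp only [smul_eq_mul]
    rw [abs_of_pos (by positivity)]
  have hsplit : ∫ x in Ioi (0:ℝ), (1 + c / x^2) * g x
      = (∫ x in Ioi (0:ℝ), g x) + ∫ x in Ioi (0:ℝ), (c / x^2) * g x := by
    rw [← integral_add (sub_int_g c hc.le) hint2]
    congr 1; ext x; ring
  have : Real.sqrt π = 2 * ∫ x in Ioi (0:ℝ), g x := by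
    rw [hC, hsplit, ← hB]; ring
  linarith [this]

lemma stepA (b : ℝ) :
    ∫ u in Ioi (0:ℝ), Real.exp (-u) / Real.sqrt u * Real.exp (-b^2/(4*u))
      = 2 * ∫ x in Ioi (0:ℝ), Real.exp (-x^2) * Real.exp (-b^2/(4*x^2)) := by
  have himg : (fun x : ℝ => x^2) '' Ioi 0 = Ioi 0 := by
    ext y; constructor
    · rintro ⟨x, hx, rfl⟩; exact pow_pos (mem_Ioi.mp hx) 2
    · intro hy; exact ⟨Real.sqrt y, Real.sqrt_pos.2 hy, Real.sq_sqrt hy.le⟩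
  have hderiv : ∀ x ∈ Ioi (0:ℝ), HasDerivWithinAt (fun x : ℝ => x^2) (2*x) (Ioi 0) x := by
    intro x _
    simpa using (hasDerivAt_pow 2 x).hasDerivWithinAt (s := Ioi 0)
  have hinj : InjOn (fun x : ℝ => x^2) (Ioi 0) := by
    apply StrictMonoOn.injOn
    intro a ha b hb hab
    exact pow_lt_pow_left₀ hab (le_of_lt ha) two_ne_zero
  conv_lhs => rw [← himg]
  rw [integral_image_eq_integral_abs_deriv_smul measurableSet_Ioi hderiv hinj,
    ← integral_const_mul]
  apply setIntegral_congr_fun measurableSet_Ioi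
  intro x hx
  simp only [mem_Ioi] at hx
  simp only [smul_eq_mul]
  rw [abs_of_pos (by positivity), Real.sqrt_sq hx.le]
  field_simp

theorem subordination_identity (t γ : ℝ) (ht : 0 < t) (hγ : 0 ≤ γ) :
    Real.exp (-t * γ) =
      (1 / Real.sqrt Real.pi) *
        ∫ u in Set.Ioi (0 : ℝ),
          (Real.exp (-u) / Real.sqrt u) * Real.exp (-γ ^ 2 * t ^ 2 / (4 * u)) := by
  have hπ : (0:ℝ) < Real.sqrt π := Real.sqrt_pos.2 Real.pi_pos
  rcases eq_or_lt_of_le hγ with h0 | h0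
  · -- γ = 0
    subst h0
    have : ∫ u in Ioi (0:ℝ), (Real.exp (-u) / Real.sqrt u) * Real.exp (-(0:ℝ)^2 * t^2 / (4*u))
        = Real.sqrt π := by
      rw [← Real.Gamma_one_half_eq, Real.Gamma_eq_integral (by norm_num : (0:ℝ) < 1/2)]
      apply setIntegral_congr_fun measurableSet_Ioi
      intro u hu
      simp only [mem_Ioi] at hu
      show Real.exp (-u) / Real.sqrt u * Real.exp (-(0:ℝ)^2 * t^2 / (4*u))
          = Real.exp (-u) * u ^ ((1:ℝ)/2 - 1)
      rw [show ((1:ℝ)/2 - 1) = -(1/2) by norm_num, Real.rpow_neg hu.le,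
        ← Real.sqrt_eq_rpow]
      simp [div_eq_mul_inv]
    rw [this]
    field_simp
    simp
  · -- γ > 0
    set b := t * γ with hb
    have hbpos : 0 < b := mul_pos ht h0
    set c := b / 2 with hc
    have hcpos : 0 < c := by positivity
    have hbb : -γ^2 * t^2 = -b^2 := by rw [hb]; ring
    have key : ∫ u in Ioi (0:ℝ), (Real.exp (-u) / Real.sqrt u) * Real.exp (-γ^2 * t^2 / (4*u))
        = Real.exp (-b) * Real.sqrt π := by
      have : ∀ u : ℝ, -γ^2 * t^2 / (4*u) = -b^2 / (4*u) := by intro u; rw [hbb]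
      simp_rw [this]
      rw [stepA b]
      have h2 : ∫ x in Ioi (0:ℝ), Real.exp (-x^2) * Real.exp (-b^2/(4*x^2))
          = Real.exp (-b) * ∫ x in Ioi (0:ℝ), Real.exp (-(x - c/x)^2) := by
        rw [← integral_const_mul]
        apply setIntegral_congr_fun measurableSet_Ioi
        intro x hx
        simp only [mem_Ioi] at hx
        show Real.exp (-x^2) * Real.exp (-b^2/(4*x^2))
            = Real.exp (-b) * Real.exp (-(x - c/x)^2)
        rw [← Real.exp_add, ← Real.exp_add]
        congr 1
        have hx2 : x^2 ≠ 0 := by positivity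
        field_simp [hc]
        ring
      rw [h2, glasser c hcpos]
      ring
    rw [key]
    field_simp
    rfl
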